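/- Let T_n : X → Y be a sequence of limited completely continuous operators and T : X → Y an operator with ‖T_n − T‖ → 0. Then T is limited completely continuous. -/

import Mathlib

open Filter Topology

section Defs

variable {Z : Type*} [NormedAddCommGroup Z] [NormedSpace ℝ Z]

/-- A sequence is weakly null: every continuous linear functional sends it to a null sequence. -/
def WeaklyNull (x : ℕ → Z) : Prop :=
  ∀ f : Z →L[ℝ] ℝ, Tendsto (fun n => f (x n)) atTop (𝓝 (0 : ℝ))

/-- A sequence is weakly `p`-summable: every functional sends it into `ℓ_p`. -/
def WeaklyPSummable (p : ENNReal) (x : ℕ → Z) : Prop :=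
  ∀ f : Z →L[ℝ] ℝ, Memℓp (fun n => f (x n)) p

/-- A set is limited: every weak*-null sequence of functionals tends to `0` uniformly on it. -/
def IsLimitedSet (A : Set Z) : Prop :=
  ∀ g : ℕ → Z →L[ℝ] ℝ, (∀ z : Z, Tendsto (fun k => g k z) atTop (𝓝 (0 : ℝ))) →
    ∀ ε > 0, ∃ N, ∀ k ≥ N, ∀ a ∈ A, |g k a| < ε

/-- A set is a Dunford–Pettis set: every weakly null sequence of functionals tends to `0`
uniformly on it. -/
def IsDPSet (A : Set Z) : Prop :=
  ∀ g : ℕ → Z →L[ℝ] ℝ, WeaklyNull g →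
    ∀ ε > 0, ∃ N, ∀ k ≥ N, ∀ a ∈ A, |g k a| < ε

end Defs

/-- An operator is limited completely continuous. -/
def Lcc {X Y : Type*} [NormedAddCommGroup X] [NormedSpace ℝ X]
    [NormedAddCommGroup Y] [NormedSpace ℝ Y] (T : X →L[ℝ] Y) : Prop :=
  ∀ x : ℕ → X, IsLimitedSet (Set.range x) → WeaklyNull x →
    Tendsto (fun n => ‖T (x n)‖) atTop (𝓝 (0 : ℝ))

theorem stmt7 {X Y : Type*} [NormedAddCommGroup X] [NormedSpace ℝ X] [CompleteSpace X]
    [NormedAddCommGroup Y] [NormedSpace ℝ Y] [CompleteSpace Y]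
    (T : ℕ → X →L[ℝ] Y) (S : X →L[ℝ] Y)
    (h1 : ∀ n, Lcc (T n))
    (h2 : Tendsto (fun n => ‖T n - S‖) atTop (𝓝 (0 : ℝ))) :
    Lcc S := by
  intro x hlim hwn
  -- boundedness of x via Banach–Steinhaus in the bidual
  obtain ⟨M, hM⟩ : ∃ M, ∀ n, ‖x n‖ ≤ M := by
    set g : ℕ → StrongDual ℝ X →L[ℝ] ℝ :=
      fun n => NormedSpace.inclusionInDoubleDualLi ℝ (x n) with hg
    have hb : ∀ f : StrongDual ℝ X, ∃ C, ∀ n, ‖g n f‖ ≤ C := by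
      intro f
      obtain ⟨C, hC⟩ := (hwn f).norm.bddAbove_range
      exact ⟨C, fun n => hC ⟨n, rfl⟩⟩
    obtain ⟨C, hC⟩ := banach_steinhaus hb
    refine ⟨C, fun n => ?_⟩
    have : ‖g n‖ = ‖x n‖ := (NormedSpace.inclusionInDoubleDualLi ℝ).norm_map (x n)
    rw [← this]; exact hC n
  rw [Metric.tendsto_atTop]
  intro ε hε
  have hM0 : (0:ℝ) < M + 1 := by
    have : (0:ℝ) ≤ M := le_trans (norm_nonneg _) (hM 0)
    linarith
  have hε2 : 0 < ε / (2 * (M + 1)) := by positivity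
  -- choose n₀ with small operator norm difference
  obtain ⟨n₀, hn₀⟩ := (Metric.tendsto_atTop.mp h2) (ε / (2 * (M + 1))) hε2
  have hTn := (Metric.tendsto_atTop.mp (h1 n₀ x hlim hwn)) (ε / 2) (by positivity)
  obtain ⟨N, hN⟩ := hTn
  refine ⟨N, fun n hn => ?_⟩
  have hdist := hN n hn
  have h1' : ‖T n₀ (x n)‖ < ε / 2 := by
    have := hdist
    rw [Real.dist_eq, sub_zero] at this
    exact lt_of_le_of_lt (le_abs_self _) this
  have hop : ‖T n₀ - S‖ < ε / (2 * (M + 1)) := by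
    have := hn₀ n₀ le_rfl
    rw [Real.dist_eq, sub_zero] at this
    exact lt_of_le_of_lt (le_abs_self _) this
  have h2' : ‖(T n₀ - S) (x n)‖ ≤ ‖T n₀ - S‖ * ‖x n‖ := (T n₀ - S).le_opNorm _
  have h3' : ‖(T n₀ - S) (x n)‖ < ε / 2 := by
    calc ‖(T n₀ - S) (x n)‖ ≤ ‖T n₀ - S‖ * ‖x n‖ := h2'
      _ ≤ ‖T n₀ - S‖ * (M + 1) := by
          have := hM n
          have h0 : (0:ℝ) ≤ ‖T n₀ - S‖ := norm_nonneg _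
          nlinarith
      _ < (ε / (2 * (M + 1))) * (M + 1) := by
          exact mul_lt_mul_of_pos_right hop hM0
      _ = ε / 2 := by field_simp
  have : ‖S (x n)‖ ≤ ‖T n₀ (x n)‖ + ‖(T n₀ - S) (x n)‖ := by
    have : S (x n) = T n₀ (x n) - (T n₀ - S) (x n) := by
      simp [ContinuousLinearMap.sub_apply]
    rw [this]; exact norm_sub_le _ _
  rw [Real.dist_eq, sub_zero]
  have hnn : |‖S (x n)‖| = ‖S (x n)‖ := abs_of_nonneg (norm_nonneg _)
  rw [hnn]
  linarith
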